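/- Let g ∈ G be an element such that no conjugate of g lies in A, i.e. there is no x ∈ G with x·g·x⁻¹ ∈ A. Then the cyclic subgroup ⟨g⟩ is separable in G: for every h ∈ G with h ∉ ⟨g⟩ there is a finite-index normal subgroup N of G with h ∉ ⟨g⟩·N. -/

import Mathlib

open Subgroup Pointwise
open scoped Matrix

/-- The free abelian group of rank `n`, written multiplicatively. -/
abbrev FreeAb (n : ℕ) : Type := Multiplicative (Fin n → ℤ)

/-- The isomorphism from `A = ⊤` onto the image `φ(A)` induced by an injective
endomorphism `φ` of the free abelian group `A`. -/
noncomputable def ascIso {n : ℕ} (φ : FreeAb n →* FreeAb n) (hφ : Function.Injective φ) :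
    (⊤ : Subgroup (FreeAb n)) ≃* φ.range :=
  Subgroup.topEquiv.trans (MonoidHom.ofInjective hφ)

/-- The ascending HNN extension `G = A∗_φ = ⟨A, t ∣ t·a·t⁻¹ = φ(a) for a ∈ A⟩`,
realized as the HNN extension of `A` over the subgroups `⊤` and `φ.range`. -/
abbrev AscHNN {n : ℕ} (φ : FreeAb n →* FreeAb n) (hφ : Function.Injective φ) : Type :=
  HNNExtension (FreeAb n) ⊤ φ.range (ascIso φ hφ)

namespace StmtFive

/-! ### Generalities -/

/-- Given `Φ^M = 1`, the homomorphism `Multiplicative (ZMod M) →* MulAut X`. -/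
def thetaHom {X : Type*} [Group X] (Φ : MulAut X) (M : ℕ) [NeZero M] (hM : Φ ^ M = 1) :
    Multiplicative (ZMod M) →* MulAut X where
  toFun z := Φ ^ (Multiplicative.toAdd z).val
  map_one' := by simp [ZMod.val_zero]
  map_mul' x y := by
    have key : ∀ k : ℕ, Φ ^ (k % M) = Φ ^ k := by
      intro k
      conv_rhs => rw [← Nat.mod_add_div k M]
      rw [pow_add, pow_mul, hM, one_pow, mul_one]
    show Φ ^ (Multiplicative.toAdd x + Multiplicative.toAdd y).val = _
    rw [ZMod.val_add, key, pow_add]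

theorem thetaHom_intCast {X : Type*} [Group X] (Φ : MulAut X) (M : ℕ) [NeZero M]
    (hM : Φ ^ M = 1) (hM1 : 1 < M) :
    ∀ k : ℤ, thetaHom Φ M hM (Multiplicative.ofAdd ((k : ZMod M))) = Φ ^ k := by
  have h := MonoidHom.ext_mint
    (f := (thetaHom Φ M hM).comp (AddMonoidHom.toMultiplicative (Int.castAddHom (ZMod M))))
    (g := zpowersHom (MulAut X) Φ) ?_
  · intro k
    exact DFunLike.congr_fun h (Multiplicative.ofAdd k)
  · show thetaHom Φ M hM (Multiplicative.ofAdd ((1 : ℤ) : ZMod M)) = Φ ^ (1 : ℤ)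
    rw [Int.cast_one, zpow_one]
    show Φ ^ (Multiplicative.toAdd (Multiplicative.ofAdd (1 : ZMod M))).val = Φ
    rw [toAdd_ofAdd, ZMod.val_one_eq_one_mod]
    rw [Nat.mod_eq_of_lt hM1, pow_one]

/-- power of an element of the semidirect product whose right part acts trivially. -/
theorem sd_pow {N G : Type*} [Group N] [Group G] {θ : G →* MulAut N}
    (z : N ⋊[θ] G) (hz : θ z.right = 1) (s : ℕ) :
    z ^ s = ⟨z.left ^ s, z.right ^ s⟩ := by
  induction s with
  | zero => ext <;> simp
  | succ s ih =>
    rw [pow_succ, ih]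
    ext
    · show z.left ^ s * θ (z.right ^ s) z.left = z.left ^ (s + 1)
      rw [map_pow, hz, one_pow]
      show z.left ^ s * z.left = _
      rw [pow_succ]
    · show z.right ^ s * z.right = z.right ^ (s+1)
      rw [pow_succ]

instance sd_finite {N G : Type*} [Group N] [Group G] [Finite N] [Finite G] (θ : G →* MulAut N) :
    Finite (N ⋊[θ] G) :=
  Finite.of_injective (fun x => ((x.left, x.right) : N × G))
    (fun a b h => SemidirectProduct.ext (congrArg Prod.fst h) (congrArg Prod.snd h))

theorem aq_pow_card {n Q : ℕ} (v : Multiplicative (Fin n → ZMod Q)) : v ^ Q = 1 := by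
  rw [← ofAdd_toAdd v, ← ofAdd_nsmul]
  have : Q • Multiplicative.toAdd v = 0 := by
    ext i
    show (Q : ℕ) • (Multiplicative.toAdd v) i = 0
    rw [nsmul_eq_mul, ZMod.natCast_self, zero_mul]
  rw [this, ofAdd_zero]

theorem int_div_lemma (m : ℤ) (hm : m ≠ 0) (c : ℕ) (i : ℤ)
    (h : ((m.natAbs * c : ℕ) : ℤ) ∣ m * i) : (c : ℤ) ∣ i := by
  have h1 : (m.natAbs * c) ∣ (m * i).natAbs := by
    have := Int.natAbs_dvd_natAbs.2 h
    rwa [Int.natAbs_natCast] at this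
  rw [Int.natAbs_mul] at h1
  have h2 : c ∣ i.natAbs := by
    rcases h1 with ⟨k, hk⟩
    have hm' : m.natAbs ≠ 0 := by simpa using hm
    exact ⟨k, by
      have := hk
      rw [mul_assoc] at this
      exact Nat.eq_of_mul_eq_mul_left (Nat.pos_of_ne_zero hm') this⟩
  exact Int.dvd_natAbs.1 (Int.natCast_dvd_natCast.2 h2)

theorem not_dvd_big (Q : ℕ) (z : ℤ) (hz : z ≠ 0) (h : z.natAbs < Q) : ¬ ((Q : ℤ) ∣ z) := by
  intro hdvd
  have h1 : Q ∣ z.natAbs := by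
    have := Int.natAbs_dvd_natAbs.2 hdvd
    rwa [Int.natAbs_natCast] at this
  have := Nat.le_of_dvd (Int.natAbs_pos.2 hz) h1
  omega

/-! ### Structure of the ascending HNN extension -/

variable {n : ℕ} (φ : FreeAb n →* FreeAb n) (hφ : Function.Injective φ)

local notation "τ" => (HNNExtension.t : AscHNN φ hφ)
local notation "ι" => (HNNExtension.of : FreeAb n →* AscHNN φ hφ)

theorem asc_coe (a : (⊤ : Subgroup (FreeAb n))) :
    ((ascIso φ hφ a : φ.range) : FreeAb n) = φ (a : FreeAb n) := rfl

theorem t_mul (a : FreeAb n) : τ * ι a = ι (φ a) * τ := by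
  have := HNNExtension.t_mul_of (φ := ascIso φ hφ) ⟨a, trivial⟩
  exact this

theorem tpow_mul (k : ℕ) : ∀ (a : FreeAb n), τ ^ k * ι a = ι (φ^[k] a) * τ ^ k := by
  induction k with
  | zero => simp
  | succ k ih =>
    intro a
    have : τ ^ (k+1) * ι a = τ ^ k * (ι (φ a) * τ) := by
      rw [pow_succ, mul_assoc, ← t_mul]
    rw [this, ← mul_assoc, ih (φ a), Function.iterate_succ_apply, mul_assoc, pow_succ]

theorem of_conj (k : ℕ) (a : FreeAb n) : ι (φ^[k] a) = τ ^ k * ι a * (τ ^ k)⁻¹ := by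
  rw [tpow_mul]; group

theorem of_shift (k p q : ℕ) (a : FreeAb n) :
    (τ ^ p)⁻¹ * ι a * τ ^ q = (τ ^ (p + k))⁻¹ * ι (φ^[k] a) * τ ^ (q + k) := by
  rw [of_conj φ hφ k a, pow_add, pow_add]
  group

/-- Normal form : every element is `t^{-p} a t^q`. -/
theorem normal_form (x : AscHNN φ hφ) :
    ∃ (p q : ℕ) (a : FreeAb n), x = (τ ^ p)⁻¹ * ι a * τ ^ q := by
  induction x using HNNExtension.induction_on with
  | of g => exact ⟨0, 0, g, by simp⟩
  | t => exact ⟨0, 1, 1, by simp⟩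
  | inv x ih =>
    obtain ⟨p, q, a, rfl⟩ := ih
    exact ⟨q, p, a⁻¹, by simp [mul_assoc]⟩
  | mul x y ihx ihy =>
    obtain ⟨p, q, a, rfl⟩ := ihx
    obtain ⟨p', q', b, rfl⟩ := ihy
    refine ⟨p + p', q + q', φ^[p'] a * φ^[q] b, ?_⟩
    rw [map_mul, of_shift φ hφ p' p q a, of_shift φ hφ q p' q' b, add_comm p' q]
    group

/-- The homomorphism `G →* ℤ` counting `t`-exponent. -/
noncomputable def piZ : AscHNN φ hφ →* Multiplicative ℤ :=
  HNNExtension.lift 1 (Multiplicative.ofAdd 1) (fun _ => by simp)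

@[simp] theorem piZ_of (a : FreeAb n) : piZ φ hφ (ι a) = 1 := by simp [piZ]
@[simp] theorem piZ_t : piZ φ hφ τ = Multiplicative.ofAdd 1 := by simp [piZ]

theorem piZ_nf (p q : ℕ) (a : FreeAb n) :
    piZ φ hφ ((τ ^ p)⁻¹ * ι a * τ ^ q) = Multiplicative.ofAdd ((q : ℤ) - p) := by
  simp [sub_eq_neg_add, ← ofAdd_nsmul]

/-! ### The matrix of `φ` -/

/-- `φ` as an additive monoid hom. -/
def phiAdd : (Fin n → ℤ) →+ (Fin n → ℤ) where
  toFun v := Multiplicative.toAdd (φ (Multiplicative.ofAdd v))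
  map_zero' := by simpa using congrArg Multiplicative.toAdd (map_one φ)
  map_add' x y := by simpa using congrArg Multiplicative.toAdd (map_mul φ (.ofAdd x) (.ofAdd y))

/-- The matrix of φ. -/
def Dmat : Matrix (Fin n) (Fin n) ℤ := fun i j => phiAdd φ (Pi.single j 1) i

theorem phiAdd_eq_mulVec (v : Fin n → ℤ) : phiAdd φ v = Dmat φ *ᵥ v := by
  have h : (phiAdd φ).toIntLinearMap = Matrix.toLin' (Dmat φ) := by
    apply (Pi.basisFun ℤ (Fin n)).ext
    intro j
    rw [Pi.basisFun_apply]
    ext i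
    simp [Matrix.toLin'_apply, Dmat]
  have := LinearMap.congr_fun h v
  simpa [Matrix.toLin'_apply] using this

theorem det_Dmat_ne_zero (hφ : Function.Injective φ) : (Dmat φ).det ≠ 0 := by
  intro hdet
  obtain ⟨v, hv, hv0⟩ := (Matrix.exists_mulVec_eq_zero_iff).2 hdet
  apply hv
  have h1 : φ (Multiplicative.ofAdd v) = 1 := by
    have : phiAdd φ v = 0 := by rw [phiAdd_eq_mulVec, hv0]
    simpa [phiAdd] using congrArg Multiplicative.ofAdd this
  have := hφ (a₁ := Multiplicative.ofAdd v) (a₂ := 1) (by simpa using h1)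
  simpa using congrArg Multiplicative.toAdd this

/-! ### mod-q reduction -/

theorem isUnit_detq (Q : ℕ) [Fact Q.Prime] (hd : ¬ ((Q : ℤ) ∣ (Dmat φ).det)) :
    IsUnit (((Dmat φ).map (Int.cast : ℤ → ZMod Q)).det) := by
  have h : ((Dmat φ).map (Int.cast : ℤ → ZMod Q)).det = (((Dmat φ).det : ℤ) : ZMod Q) := by
    have := RingHom.map_det (Int.castRingHom (ZMod Q)) (Dmat φ)
    simpa [RingHom.mapMatrix_apply] using this.symm
  rw [h]
  refine (isUnit_iff_ne_zero).2 ?_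
  simpa [ZMod.intCast_zmod_eq_zero_iff_dvd] using hd

/-- reduction mod Q of D, as an additive automorphism of `(ZMod Q)^n`. -/
noncomputable def PhiAdd (Q : ℕ) [Fact Q.Prime] (hd : ¬ ((Q : ℤ) ∣ (Dmat φ).det)) :
    (Fin n → ZMod Q) ≃+ (Fin n → ZMod Q) where
  toFun v := ((Dmat φ).map (Int.cast : ℤ → ZMod Q)) *ᵥ v
  invFun v := ((Dmat φ).map (Int.cast : ℤ → ZMod Q))⁻¹ *ᵥ v
  left_inv v := by
    show _ *ᵥ (_ *ᵥ _) = v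
    rw [Matrix.mulVec_mulVec, Matrix.nonsing_inv_mul _ (isUnit_detq φ Q hd),
      Matrix.one_mulVec]
  right_inv v := by
    show _ *ᵥ (_ *ᵥ _) = v
    rw [Matrix.mulVec_mulVec, Matrix.mul_nonsing_inv _ (isUnit_detq φ Q hd),
      Matrix.one_mulVec]
  map_add' x y := by
    change _ *ᵥ (x + y) = _ *ᵥ x + _ *ᵥ y
    exact Matrix.mulVec_add _ _ _

/-- reduction mod Q of D as a multiplicative automorphism. -/
noncomputable def PhiAut (Q : ℕ) [Fact Q.Prime] (hd : ¬ ((Q : ℤ) ∣ (Dmat φ).det)) :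
    MulAut (Multiplicative (Fin n → ZMod Q)) :=
  AddEquiv.toMultiplicative (PhiAdd φ Q hd)

noncomputable instance mulaut_finite (n Q : ℕ) [NeZero Q] :
    Finite (MulAut (Multiplicative (Fin n → ZMod Q))) :=
  Finite.of_injective
    (fun e => (e : Multiplicative (Fin n → ZMod Q) → Multiplicative (Fin n → ZMod Q)))
    (fun a b hab => by ext x : 1; exact congrFun hab x)

/-- The reduction homomorphism. -/
def redHom (n Q : ℕ) : FreeAb n →* Multiplicative (Fin n → ZMod Q) :=
  AddMonoidHom.toMultiplicative
    { toFun := fun v i => ((v i : ℤ) : ZMod Q)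
      map_zero' := by ext i; simp
      map_add' := by intro x y; ext i; push_cast; simp }

theorem toAdd_redHom (n Q : ℕ) (a : FreeAb n) (i : Fin n) :
    Multiplicative.toAdd (redHom n Q a) i = ((Multiplicative.toAdd a i : ℤ) : ZMod Q) := rfl

theorem redHom_phi (Q : ℕ) [Fact Q.Prime] (hd : ¬ ((Q : ℤ) ∣ (Dmat φ).det)) (a : FreeAb n) :
    redHom n Q (φ a) = PhiAut φ Q hd (redHom n Q a) := by
  apply Multiplicative.toAdd.injective
  ext i
  show ((Multiplicative.toAdd (φ a) i : ℤ) : ZMod Q) = _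
  have h1 : Multiplicative.toAdd (φ a) = Dmat φ *ᵥ Multiplicative.toAdd a :=
    phiAdd_eq_mulVec φ (Multiplicative.toAdd a)
  rw [h1]
  have h2 := RingHom.map_mulVec (Int.castRingHom (ZMod Q)) (Dmat φ)
    (Multiplicative.toAdd a) i
  exact h2

theorem redHom_eq_one_iff (Q : ℕ) (a : FreeAb n) :
    redHom n Q a = 1 ↔ ∀ i, ((Q : ℤ) ∣ Multiplicative.toAdd a i) := by
  constructor
  · intro h i
    have := congrFun (congrArg Multiplicative.toAdd h) i
    rw [toAdd_redHom] at this
    exact (ZMod.intCast_zmod_eq_zero_iff_dvd _ _).1 this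
  · intro h
    apply Multiplicative.toAdd.injective
    ext i
    show ((Multiplicative.toAdd a i : ℤ) : ZMod Q) = 0
    exact (ZMod.intCast_zmod_eq_zero_iff_dvd _ _).2 (h i)


/-! ### The main finite quotient construction -/

theorem main_sep (g : AscHNN φ hφ) (m : ℤ) (hm : m ≠ 0)
    (hπg : piZ φ hφ g = Multiplicative.ofAdd m)
    (Q : ℕ) (hQ : Q.Prime) (hd : ¬ ((Q : ℤ) ∣ (Dmat φ).det)) :
    ∃ N : Subgroup (AscHNN φ hφ), N.Normal ∧ N.FiniteIndex ∧
      (∀ x : AscHNN φ hφ,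
        x ∈ ((Subgroup.zpowers g : Set (AscHNN φ hφ)) * (N : Set (AscHNN φ hφ))) →
          m ∣ Multiplicative.toAdd (piZ φ hφ x)) ∧
      (∀ (p : ℕ) (a : FreeAb n),
        ((τ ^ p)⁻¹ * ι a * τ ^ p) ∈
            ((Subgroup.zpowers g : Set (AscHNN φ hφ)) * (N : Set (AscHNN φ hφ))) →
          ∀ i : Fin n, ((Q : ℤ) ∣ Multiplicative.toAdd a i)) := by
  haveI : Fact Q.Prime := ⟨hQ⟩
  haveI : NeZero Q := ⟨hQ.ne_zero⟩
  set Φ := PhiAut φ Q hd with hΦdef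
  set r := orderOf Φ with hrdef
  have hrpos : 0 < r := orderOf_pos Φ
  set M := m.natAbs * (r * Q) with hMdef
  have hmabs : 0 < m.natAbs := Int.natAbs_pos.2 hm
  have hMpos : 0 < M := Nat.mul_pos hmabs (Nat.mul_pos hrpos hQ.pos)
  haveI : NeZero M := ⟨hMpos.ne'⟩
  have hM1 : 1 < M := by
    have h2 : 2 ≤ Q := hQ.two_le
    calc 1 < 2 := one_lt_two
    _ ≤ Q := h2
    _ ≤ r * Q := Nat.le_mul_of_pos_left Q hrpos
    _ ≤ M := Nat.le_mul_of_pos_left _ hmabs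
  have hΦM : Φ ^ M = 1 := by
    have hdvd : r ∣ M := ⟨m.natAbs * Q, by rw [hMdef]; ring⟩
    exact orderOf_dvd_iff_pow_eq_one.1 hdvd
  set θ := thetaHom Φ M hΦM with hθdef
  have hθ1 : θ (Multiplicative.ofAdd (1 : ZMod M)) = Φ := by
    have h := thetaHom_intCast Φ M hΦM hM1 1
    rw [Int.cast_one] at h
    rw [hθdef, h, zpow_one]
  have hθm : θ (Multiplicative.ofAdd ((m : ZMod M))) = Φ ^ m :=
    thetaHom_intCast Φ M hΦM hM1 m
  -- the finite target group
  haveI : Finite (Multiplicative (Fin n → ZMod Q) ⋊[θ] Multiplicative (ZMod M)) :=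
    sd_finite θ
  -- the lift
  have hx : ∀ a : (⊤ : Subgroup (FreeAb n)),
      (SemidirectProduct.inr (Multiplicative.ofAdd (1 : ZMod M)) :
        Multiplicative (Fin n → ZMod Q) ⋊[θ] Multiplicative (ZMod M)) *
        (SemidirectProduct.inl.comp (redHom n Q)) (a : FreeAb n) =
      (SemidirectProduct.inl.comp (redHom n Q)) ((ascIso φ hφ a : φ.range) : FreeAb n) *
        SemidirectProduct.inr (Multiplicative.ofAdd (1 : ZMod M)) := by
    intro a
    have h1 := SemidirectProduct.inl_aut (φ := θ) (Multiplicative.ofAdd (1 : ZMod M))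
      (redHom n Q (a : FreeAb n))
    rw [hθ1] at h1
    show SemidirectProduct.inr (Multiplicative.ofAdd (1 : ZMod M)) *
        SemidirectProduct.inl (redHom n Q (a : FreeAb n)) =
      SemidirectProduct.inl (redHom n Q ((ascIso φ hφ a : φ.range) : FreeAb n)) *
        SemidirectProduct.inr (Multiplicative.ofAdd (1 : ZMod M))
    rw [asc_coe, redHom_phi φ Q hd, h1, mul_assoc, ← map_mul, inv_mul_cancel]
    simp
  set ρ : AscHNN φ hφ →* Multiplicative (Fin n → ZMod Q) ⋊[θ] Multiplicative (ZMod M) :=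
    HNNExtension.lift (SemidirectProduct.inl.comp (redHom n Q))
      (SemidirectProduct.inr (Multiplicative.ofAdd (1 : ZMod M))) hx with hρdef
  have hρ_of : ∀ b : FreeAb n, ρ (ι b) = SemidirectProduct.inl (redHom n Q b) := by
    intro b; rw [hρdef, HNNExtension.lift_of]; rfl
  have hρ_t : ρ τ = SemidirectProduct.inr (Multiplicative.ofAdd (1 : ZMod M)) := by
    rw [hρdef, HNNExtension.lift_t]
  -- rightHom ∘ ρ computes the t-exponent mod M
  have hχ : ∀ x : AscHNN φ hφ, SemidirectProduct.rightHom (ρ x) =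
      Multiplicative.ofAdd (((Multiplicative.toAdd (piZ φ hφ x) : ℤ) : ZMod M)) := by
    have hhom : (SemidirectProduct.rightHom.comp ρ) =
        (AddMonoidHom.toMultiplicative (Int.castAddHom (ZMod M))).comp (piZ φ hφ) := by
      apply HNNExtension.hom_ext
      · refine MonoidHom.ext fun a => ?_
        show SemidirectProduct.rightHom (ρ (ι a)) =
          (AddMonoidHom.toMultiplicative (Int.castAddHom (ZMod M))) (piZ φ hφ (ι a))
        rw [hρ_of, piZ_of]
        simp
      · show SemidirectProduct.rightHom (ρ τ) =
          (AddMonoidHom.toMultiplicative (Int.castAddHom (ZMod M))) (piZ φ hφ τ)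
        rw [hρ_t, piZ_t]
        simp
    intro x
    exact DFunLike.congr_fun hhom x
  have hxright : SemidirectProduct.rightHom (ρ g) = Multiplicative.ofAdd ((m : ZMod M)) := by
    rw [hχ g, hπg]
    rfl
  -- the key vanishing
  have vanish : (ρ g) ^ (r * Q) = 1 := by
    set y := (ρ g) ^ r with hy
    have hyright : y.right = Multiplicative.ofAdd ((m : ZMod M)) ^ r := by
      have h0 : y.right = SemidirectProduct.rightHom y := rfl
      rw [h0, hy, map_pow, hxright]
    have hθy : θ y.right = 1 := by
      rw [hyright, map_pow, hθm]
      rw [← zpow_natCast (Φ ^ m) r, ← zpow_mul, mul_comm m (r : ℤ), zpow_mul,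
        zpow_natCast, pow_orderOf_eq_one, one_zpow]
    have hsd := sd_pow y hθy Q
    have hpm : (ρ g) ^ (r * Q) = y ^ Q := by rw [hy, ← pow_mul]
    rw [hpm, hsd]
    have hleft : y.left ^ Q = 1 := aq_pow_card _
    have hright : y.right ^ Q = 1 := by
      rw [hyright, ← pow_mul, ← ofAdd_nsmul]
      have hc : (r * Q) • ((m : ZMod M)) = (((m * (r * Q : ℕ) : ℤ)) : ZMod M) := by
        rw [nsmul_eq_mul]
        push_cast
        ring
      rw [hc]
      have hdvd : ((M : ℤ)) ∣ m * (r * Q : ℕ) := by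
        have hM' : (M : ℤ) = (m.natAbs : ℤ) * ((r * Q : ℕ) : ℤ) := by
          rw [hMdef]; push_cast; ring
        rw [hM']
        exact mul_dvd_mul_right (Int.natAbs_dvd.2 dvd_rfl) _
      have h0 : ((m * (r * Q : ℕ) : ℤ) : ZMod M) = 0 :=
        (ZMod.intCast_zmod_eq_zero_iff_dvd _ _).2 hdvd
      rw [h0, ofAdd_zero]
    rw [hleft, hright]
    rfl
  -- the subgroup
  refine ⟨ρ.ker, inferInstance, ?_, ?_, ?_⟩
  · infer_instance
  · -- P1
    intro x hxmem
    obtain ⟨w, hw, ν, hν, heq⟩ := Set.mem_mul.1 hxmem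
    obtain ⟨i, rfl⟩ := Subgroup.mem_zpowers_iff.1 hw
    have hνker : ρ ν = 1 := hν
    have hνM : (M : ℤ) ∣ Multiplicative.toAdd (piZ φ hφ ν) := by
      have h1 := hχ ν
      rw [hνker, map_one] at h1
      have h2 : ((Multiplicative.toAdd (piZ φ hφ ν) : ℤ) : ZMod M) = 0 := by
        have := h1.symm
        exact ofAdd_eq_one.1 this
      exact (ZMod.intCast_zmod_eq_zero_iff_dvd _ _).1 h2
    have hmM : m ∣ (M : ℤ) := by
      have hM' : (M : ℤ) = (m.natAbs : ℤ) * ((r * Q : ℕ) : ℤ) := by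
        rw [hMdef]; push_cast; ring
      rw [hM']
      exact Dvd.dvd.mul_right (Int.dvd_natAbs.2 dvd_rfl) _
    have hπx : Multiplicative.toAdd (piZ φ hφ x) =
        i * m + Multiplicative.toAdd (piZ φ hφ ν) := by
      rw [← heq, map_mul, map_zpow, hπg]
      rw [toAdd_mul, toAdd_zpow, toAdd_ofAdd, smul_eq_mul]
    rw [hπx]
    exact dvd_add (Dvd.intro_left i rfl) (dvd_trans hmM hνM)
  · -- P2
    intro p a hmem idx
    obtain ⟨w, hw, ν, hν, heq⟩ := Set.mem_mul.1 hmem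
    obtain ⟨i, rfl⟩ := Subgroup.mem_zpowers_iff.1 hw
    have hνker : ρ ν = 1 := hν
    have hρu : ρ ((τ ^ p)⁻¹ * ι a * τ ^ p) = (ρ g) ^ i := by
      rw [← heq, map_mul, map_zpow, hνker, mul_one]
    have hρu' : ρ ((τ ^ p)⁻¹ * ι a * τ ^ p) =
        ((SemidirectProduct.inr (Multiplicative.ofAdd (1 : ZMod M)) :
          Multiplicative (Fin n → ZMod Q) ⋊[θ] Multiplicative (ZMod M)) ^ p)⁻¹ *
          SemidirectProduct.inl (redHom n Q a) *
          (SemidirectProduct.inr (Multiplicative.ofAdd (1 : ZMod M))) ^ p := by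
      simp only [map_mul, map_inv, map_pow, hρ_t, hρ_of]
    have hMmi : (M : ℤ) ∣ m * i := by
      have h1 : SemidirectProduct.rightHom (ρ ((τ ^ p)⁻¹ * ι a * τ ^ p)) = 1 := by
        rw [hρu']
        simp
      rw [hρu, map_zpow, hxright] at h1
      have h2 : Multiplicative.ofAdd ((m : ZMod M)) ^ i =
          Multiplicative.ofAdd (((m * i : ℤ) : ZMod M)) := by
        rw [← ofAdd_zsmul]
        congr 1
        rw [zsmul_eq_mul]
        push_cast
        ring
      rw [h2] at h1
      have h3 : ((m * i : ℤ) : ZMod M) = 0 := ofAdd_eq_one.1 h1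
      exact (ZMod.intCast_zmod_eq_zero_iff_dvd _ _).1 h3
    have hrQi : ((r * Q : ℕ) : ℤ) ∣ i := by
      apply int_div_lemma m hm (r * Q) i
      rw [← hMdef]
      exact hMmi
    have hxi : (ρ g) ^ i = 1 := by
      obtain ⟨s, rfl⟩ := hrQi
      rw [zpow_mul, zpow_natCast, vanish, one_zpow]
    have hinl : (SemidirectProduct.inl (redHom n Q a) :
        Multiplicative (Fin n → ZMod Q) ⋊[θ] Multiplicative (ZMod M)) = 1 := by
      have h1 : ((SemidirectProduct.inr (Multiplicative.ofAdd (1 : ZMod M)) :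
          Multiplicative (Fin n → ZMod Q) ⋊[θ] Multiplicative (ZMod M)) ^ p)⁻¹ *
            SemidirectProduct.inl (redHom n Q a) *
            (SemidirectProduct.inr (Multiplicative.ofAdd (1 : ZMod M))) ^ p = 1 := by
        rw [← hρu', hρu, hxi]
      calc (SemidirectProduct.inl (redHom n Q a) :
          Multiplicative (Fin n → ZMod Q) ⋊[θ] Multiplicative (ZMod M))
          = (SemidirectProduct.inr (Multiplicative.ofAdd (1 : ZMod M)) ^ p) *
            (((SemidirectProduct.inr (Multiplicative.ofAdd (1 : ZMod M)) :
              Multiplicative (Fin n → ZMod Q) ⋊[θ] Multiplicative (ZMod M)) ^ p)⁻¹ *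
              SemidirectProduct.inl (redHom n Q a) *
              (SemidirectProduct.inr (Multiplicative.ofAdd (1 : ZMod M))) ^ p) *
            (SemidirectProduct.inr (Multiplicative.ofAdd (1 : ZMod M)) ^ p)⁻¹ := by
            group
        _ = 1 := by rw [h1]; group
    have hred : redHom n Q a = 1 := SemidirectProduct.inl_injective hinl
    exact (redHom_eq_one_iff Q a).1 hred idx

end StmtFive

open StmtFive in
/-- Every cyclic subgroup of `G = A∗_φ` generated by an element `g`
with no conjugate in `A` is separable: for every `h ∉ ⟨g⟩` there is a finite-index
normal subgroup `N` of `G` with `h ∉ ⟨g⟩·N`. -/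
theorem stmt_5 (n : ℕ) (hn : 1 ≤ n)
    (φ : FreeAb n →* FreeAb n) (hφ : Function.Injective φ)
    (g : AscHNN φ hφ)
    (hg : ¬ ∃ x : AscHNN φ hφ,
      x * g * x⁻¹ ∈ (HNNExtension.of : FreeAb n →* AscHNN φ hφ).range) :
    ∀ h : AscHNN φ hφ, h ∉ Subgroup.zpowers g →
      ∃ N : Subgroup (AscHNN φ hφ), N.Normal ∧ N.FiniteIndex ∧
        h ∉ ((Subgroup.zpowers g : Set (AscHNN φ hφ)) * (N : Set (AscHNN φ hφ))) := by
  intro h hmem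
  set m := Multiplicative.toAdd (piZ φ hφ g) with hmdef
  have hπg : piZ φ hφ g = Multiplicative.ofAdd m := rfl
  have hm : m ≠ 0 := by
    intro h0
    obtain ⟨p, q, a, hg'⟩ := normal_form φ hφ g
    have h1 : m = (q : ℤ) - p := by rw [hmdef, hg', piZ_nf]; rfl
    have h2 : (q : ℤ) = (p : ℤ) := by omega
    have hqp : q = p := by exact_mod_cast h2
    rw [hqp] at hg'
    apply hg
    refine ⟨HNNExtension.t ^ p, ⟨a, ?_⟩⟩
    rw [hg']
    group
  by_cases hdvd : m ∣ Multiplicative.toAdd (piZ φ hφ h)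
  · -- `m` divides the t-exponent of `h`
    obtain ⟨j, hj⟩ := hdvd
    set u := g ^ (-j) * h with hudef
    have hπu : Multiplicative.toAdd (piZ φ hφ u) = 0 := by
      rw [hudef, map_mul, map_zpow, hπg, toAdd_mul, toAdd_zpow, toAdd_ofAdd, smul_eq_mul, hj]
      ring
    obtain ⟨p, q, a, hu'⟩ := normal_form φ hφ u
    have hqp : q = p := by
      have h1 : Multiplicative.toAdd (piZ φ hφ u) = (q : ℤ) - p := by rw [hu', piZ_nf]; rfl
      rw [hπu] at h1
      have h2 : (q : ℤ) = (p : ℤ) := by omega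
      exact_mod_cast h2
    rw [hqp] at hu'
    have ha : a ≠ 1 := by
      intro h0
      rw [h0, map_one, mul_one, inv_mul_cancel] at hu'
      apply hmem
      rw [hudef] at hu'
      have h1 : h = g ^ j := by
        have h2 : h = (g ^ (-j))⁻¹ * 1 := by rw [← hu']; group
        rw [h2, zpow_neg, inv_inv, mul_one]
      exact Subgroup.mem_zpowers_iff.2 ⟨j, h1.symm⟩
    have ha' : Multiplicative.toAdd a ≠ 0 := by
      intro hc
      apply ha
      have := congrArg Multiplicative.ofAdd hc
      simpa using this
    obtain ⟨idx, hidx⟩ := Function.ne_iff.1 ha'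
    obtain ⟨Q, hQle, hQp⟩ := Nat.exists_infinite_primes
      (max ((Dmat φ).det.natAbs) ((Multiplicative.toAdd a idx).natAbs) + 1)
    have hd : ¬ ((Q : ℤ) ∣ (Dmat φ).det) := by
      apply not_dvd_big Q _ (det_Dmat_ne_zero φ hφ)
      have := le_max_left ((Dmat φ).det.natAbs) ((Multiplicative.toAdd a idx).natAbs)
      omega
    have hda : ¬ ((Q : ℤ) ∣ Multiplicative.toAdd a idx) := by
      apply not_dvd_big Q _ (by simpa using hidx)
      have := le_max_right ((Dmat φ).det.natAbs) ((Multiplicative.toAdd a idx).natAbs)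
      omega
    obtain ⟨N, hN1, hN2, _, hP2⟩ := main_sep φ hφ g m hm hπg Q hQp hd
    refine ⟨N, hN1, hN2, fun hc => ?_⟩
    obtain ⟨w, hw, ν, hν, heq⟩ := Set.mem_mul.1 hc
    obtain ⟨i, rfl⟩ := Subgroup.mem_zpowers_iff.1 hw
    have hueq : u = g ^ (-j + i) * ν := by
      rw [hudef, ← heq, ← mul_assoc, ← zpow_add]
    have humem : ((HNNExtension.t : AscHNN φ hφ) ^ p)⁻¹ * HNNExtension.of a *
        (HNNExtension.t : AscHNN φ hφ) ^ p ∈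
        ((Subgroup.zpowers g : Set (AscHNN φ hφ)) * (N : Set (AscHNN φ hφ))) := by
      rw [← hu', hueq]
      exact Set.mul_mem_mul (Subgroup.mem_zpowers_iff.2 ⟨-j + i, rfl⟩) hν
    exact hda (hP2 p a humem idx)
  · -- `m` does not divide the t-exponent of `h`
    obtain ⟨Q, hQle, hQp⟩ := Nat.exists_infinite_primes ((Dmat φ).det.natAbs + 1)
    have hd : ¬ ((Q : ℤ) ∣ (Dmat φ).det) :=
      not_dvd_big Q _ (det_Dmat_ne_zero φ hφ) (by omega)
    obtain ⟨N, hN1, hN2, hP1, _⟩ := main_sep φ hφ g m hm hπg Q hQp hd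
    exact ⟨N, hN1, hN2, fun hc => hdvd (hP1 h hc)⟩
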